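/- arXiv:1305.3716 — 3 statements merged into one kernel-verified Lean document; each statement's English description precedes it below -/
import Mathlib

section
/- For every integer n ≥ 1, the number of parallelogram polyominoes of size n equals the n-th Catalan number Cat_n (the number of binary trees with n vertices). -/
/-- A parallelogram polyomino, as a finite set of unit cells. -/
def IsPP (P : Finset (ℕ × ℕ)) : Prop :=
  ∃ (h : ℕ) (l r : ℕ → ℕ),
    (∀ p ∈ P, p.1 ≤ h) ∧
    (∀ x ≤ h, ∀ y : ℕ, ((x, y) ∈ P ↔ l x ≤ y ∧ y ≤ r x)) ∧
    (∀ x ≤ h, l x ≤ r x) ∧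
    l 0 = 0 ∧
    (∀ x < h, l x ≤ l (x + 1) ∧ r x ≤ r (x + 1) ∧ l (x + 1) ≤ r x)

/-- The size of a parallelogram polyomino: its number of rows plus its number of
columns, minus 1. -/
def ppSize (P : Finset (ℕ × ℕ)) : ℕ :=
  (P.image Prod.fst).card + (P.image Prod.snd).card - 1

set_option linter.unusedSectionVars false

namespace PPCat
open List DyckStep

/-- chain condition between consecutive rows -/
def RC (a b : ℕ × ℕ) : Prop := a.1 ≤ b.1 ∧ a.2 ≤ b.2 ∧ b.1 ≤ a.2

/-- a valid list of rows of a parallelogram polyomino -/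
def Valid (L : List (ℕ × ℕ)) : Prop :=
  ∃ a t, L = a :: t ∧ a.1 = 0 ∧ a.1 ≤ a.2 ∧ List.Chain' RC L

def rowsSize (L : List (ℕ × ℕ)) : ℕ := L.length + (L.getLast?.elim 0 Prod.snd)

def encAux : ℕ × ℕ → List (ℕ × ℕ) → List DyckStep
  | (l, r), [] => List.replicate (r - l + 1) D
  | (l, r), b :: t => List.replicate (b.1 - l + 1) D ++ List.replicate (b.2 - r + 1) U
      ++ encAux b t


lemma encAux_nil_eq (l r : ℕ) : encAux (l, r) [] = List.replicate (r - l + 1) D := rfl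

def enc : List (ℕ × ℕ) → List DyckStep
  | [] => []
  | a :: t => List.replicate (a.2 - a.1 + 1) U ++ encAux a t

def decAux : ℕ → ℕ × ℕ → List DyckStep → List (ℕ × ℕ)
  | 0, _, _ => []
  | f + 1, (l, r), w =>
    let d := (w.takeWhile (· = D)).length
    let rest := w.dropWhile (· = D)
    if rest = [] then []
    else
      let u := (rest.takeWhile (· = U)).length
      let a := (l + d - 1, r + u - 1)
      a :: decAux f a (rest.dropWhile (· = U))

def dec (w : List DyckStep) : List (ℕ × ℕ) :=
  let u := (w.takeWhile (· = U)).length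
  (0, u - 1) :: decAux w.length (0, u - 1) (w.dropWhile (· = U))

lemma encAux_cons_eq (l r : ℕ) (b : ℕ × ℕ) (t : List (ℕ × ℕ)) :
    encAux (l, r) (b :: t) = List.replicate (b.1 - l + 1) D ++ List.replicate (b.2 - r + 1) U
      ++ encAux b t := rfl

lemma encAux_eq_cons (a : ℕ × ℕ) (t : List (ℕ × ℕ)) :
    ∃ s, encAux a t = D :: s := by
  obtain ⟨l, r⟩ := a
  cases t with
  | nil => exact ⟨List.replicate (r - l) D, by simp [encAux, List.replicate_succ]⟩
  | cons b t => exact ⟨List.replicate (b.1 - l) D ++ List.replicate (b.2 - r + 1) U ++ encAux b t,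
      by simp [encAux, List.replicate_succ]⟩

lemma takeWhile_replicate_append {α : Type*} (p : α → Bool) (x : α) (hp : p x = true)
    (k : ℕ) (l : List α) :
    ((List.replicate k x ++ l).takeWhile p) = List.replicate k x ++ l.takeWhile p := by
  induction k with
  | zero => simp
  | succ k ih => simp [List.replicate_succ, List.takeWhile_cons, hp, ih]

lemma dropWhile_replicate_append {α : Type*} (p : α → Bool) (x : α) (hp : p x = true)
    (k : ℕ) (l : List α) :
    ((List.replicate k x ++ l).dropWhile p) = l.dropWhile p := by
  induction k with
  | zero => simp
  | succ k ih => simp [List.replicate_succ, List.dropWhile_cons, hp, ih]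

lemma takeWhile_cons_neg {α : Type*} (p : α → Bool) (x : α) (hp : ¬ p x = true) (l : List α) :
    ((x :: l).takeWhile p) = [] := by simp [List.takeWhile_cons, hp]

lemma dropWhile_cons_neg {α : Type*} (p : α → Bool) (x : α) (hp : ¬ p x = true) (l : List α) :
    ((x :: l).dropWhile p) = x :: l := by simp [List.dropWhile_cons, hp]


lemma twD (k : ℕ) (l : List DyckStep) :
    (List.replicate k D ++ U :: l).takeWhile (· = D) = List.replicate k D := by
  rw [takeWhile_replicate_append _ _ (by simp), takeWhile_cons_neg _ _ (by simp), List.append_nil]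

lemma dwD (k : ℕ) (l : List DyckStep) :
    (List.replicate k D ++ U :: l).dropWhile (· = D) = U :: l := by
  rw [dropWhile_replicate_append _ _ (by simp), dropWhile_cons_neg _ _ (by simp)]

lemma twU (k : ℕ) (l : List DyckStep) :
    (List.replicate k U ++ D :: l).takeWhile (· = U) = List.replicate k U := by
  rw [takeWhile_replicate_append _ _ (by simp), takeWhile_cons_neg _ _ (by simp), List.append_nil]

lemma dwU (k : ℕ) (l : List DyckStep) :
    (List.replicate k U ++ D :: l).dropWhile (· = U) = D :: l := by
  rw [dropWhile_replicate_append _ _ (by simp), dropWhile_cons_neg _ _ (by simp)]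

/-- decode-encode round trip -/
lemma decAux_encAux : ∀ (t : List (ℕ × ℕ)) (a : ℕ × ℕ) (f : ℕ), List.Chain' RC (a :: t) →
    f ≥ t.length + 1 → decAux f a (encAux a t) = t := by
  intro t
  induction t with
  | nil =>
    intro ⟨l, r⟩ f _ hf
    obtain ⟨f, rfl⟩ : ∃ g, f = g + 1 := ⟨f - 1, by omega⟩
    simp [decAux, encAux, List.takeWhile_replicate, List.dropWhile_replicate]
  | cons b t ih =>
    intro ⟨l, r⟩ f hc hf
    obtain ⟨f, rfl⟩ : ∃ g, f = g + 1 := ⟨f - 1, by omega⟩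
    obtain ⟨hlb, hrb, hbl⟩ : RC (l, r) b := (List.isChain_cons_cons.mp hc).1
    obtain ⟨s, hs⟩ := encAux_eq_cons b t
    have e1 : encAux (l, r) (b :: t)
        = List.replicate (b.1 - l + 1) D ++ (U :: (List.replicate (b.2 - r) U ++ encAux b t)) := by
      rw [encAux_cons_eq]
      have : List.replicate (b.2 - r + 1) U = U :: List.replicate (b.2 - r) U := rfl
      rw [this]; simp
    have e2 : U :: (List.replicate (b.2 - r) U ++ encAux b t)
        = List.replicate (b.2 - r + 1) U ++ encAux b t := rfl
    rw [decAux]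
    simp only [e1, twD, dwD]
    rw [e2, hs]
    simp only [twU, dwU, List.length_replicate]
    rw [if_neg (by simp)]
    rw [← hs]
    have h1 : l + (b.1 - l + 1) - 1 = b.1 := by omega
    have h2 : r + (b.2 - r + 1) - 1 = b.2 := by omega
    rw [h1, h2]
    have := ih b f (List.isChain_cons_cons.mp hc).2 (by simp at hf; omega)
    rw [this]

lemma length_encAux_gt : ∀ (t : List (ℕ × ℕ)) (a : ℕ × ℕ), t.length < (encAux a t).length := by
  intro t
  induction t with
  | nil => intro ⟨l, r⟩; simp [encAux]
  | cons b t ih => intro ⟨l, r⟩; simp [encAux]; have := ih b; omega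

lemma dec_enc (L : List (ℕ × ℕ)) (h : Valid L) : dec (enc L) = L := by
  obtain ⟨a, t, rfl, h0, hlr, hc⟩ := h
  obtain ⟨s, hs⟩ := encAux_eq_cons a t
  have e1 : enc (a :: t) = List.replicate (a.2 - a.1 + 1) U ++ (D :: s) := by
    rw [enc, hs]
  rw [dec, e1, twU, dwU, ← hs, List.length_replicate]
  have h2 : a.2 - a.1 + 1 - 1 = a.2 := by omega
  have ha : (0, a.2) = a := by rw [← h0]
  rw [h2, ha, decAux_encAux t a _ hc]
  have := length_encAux_gt t a
  rw [hs] at this ⊢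
  simp only [List.length_append, List.length_replicate, List.length_cons] at this ⊢
  omega

/-- any takeWhile (· = x) is a replicate -/
lemma takeWhile_eq_replicate (x : DyckStep) (l : List DyckStep) :
    l.takeWhile (· = x) = List.replicate (l.takeWhile (· = x)).length x :=
  List.eq_replicate_of_mem (fun b hb => by simpa using List.mem_takeWhile_imp hb)
lemma dropWhile_eq_cons_not {α : Type*} (p : α → Bool) :
    ∀ (l : List α) (x : α) (t : List α), l.dropWhile p = x :: t → p x = false := by
  intro l
  induction l with
  | nil => simp
  | cons a l ih =>
    intro x t h
    rw [List.dropWhile_cons] at h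
    by_cases hp : p a = true
    · rw [if_pos hp] at h; exact ih _ _ h
    · rw [if_neg hp] at h
      cases h
      simpa using hp

/-- encode-decode round trip with chain property, by strong induction on length -/
lemma decAux_spec : ∀ (N : ℕ) (w : List DyckStep) (l r : ℕ), w.length ≤ N → l ≤ r →
    (w.count D = w.count U + (r - l + 1)) →
    (∀ i, (w.take i).count D ≤ (w.take i).count U + (r - l + 1)) →
    (∃ s, w = D :: s) →
    ∀ f ≥ w.length, List.Chain' RC ((l, r) :: decAux f (l, r) w) ∧
      encAux (l, r) (decAux f (l, r) w) = w := by
  intro N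
  induction N with
  | zero => intro w l r hN _ _ _ ⟨s, hs⟩; subst hs; simp at hN
  | succ N ih =>
    intro w l r hN hlr hcount hpre ⟨s, hs⟩ f hf
    set d := (w.takeWhile (· = D)).length with hd
    have hD : w.takeWhile (· = D) = List.replicate d D := takeWhile_eq_replicate D w
    have hd1 : 1 ≤ d := by
      subst hs; rw [hd, List.takeWhile_cons]; simp
    set rest := w.dropWhile (· = D) with hrest
    have hw : w = List.replicate d D ++ rest := by rw [← hD]; exact List.takeWhile_append_dropWhile.symm
    have hdle : d ≤ r - l + 1 := by
      have hp := hpre d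
      have htake : w.take d = List.replicate d D := by
        have h2 := List.prefix_iff_eq_take.mp (List.takeWhile_prefix (l := w) (· = D))
        rw [hD, List.length_replicate] at h2
        exact h2.symm
      rw [htake] at hp
      simp [List.count_replicate] at hp
      omega
    obtain ⟨g, hfg⟩ : ∃ g, f = g + 1 := ⟨f - 1, by subst hs; simp at hf ⊢; omega⟩
    by_cases hre : rest = []
    · -- final descent
      have hwe : w = List.replicate d D := by rw [hw, hre, List.append_nil]
      have hdc : d = r - l + 1 := by
        have hcc := hcount
        rw [hwe] at hcc
        simp [List.count_replicate] at hcc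
        omega
      subst hfg
      rw [decAux]
      simp only [← hrest, ← hd, hre, if_pos rfl]
      refine ⟨List.isChain_singleton _, ?_⟩
      rw [if_pos trivial, encAux_nil_eq, hwe, hdc]
    · -- middle valley
      obtain ⟨x, rt, hxt⟩ : ∃ x rt, rest = x :: rt := by
        obtain ⟨x, rt, h⟩ := List.exists_cons_of_ne_nil hre
        exact ⟨x, rt, h⟩
      have hxU : x = U := by
        have := dropWhile_eq_cons_not (· = D) w x rt (by rw [← hrest]; exact hxt)
        simp at this
        exact x.dichotomy.resolve_right this
      have hrhead : rest = U :: rt := hxU ▸ hxt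
      set u := (rest.takeWhile (· = U)).length with hu
      have hU : rest.takeWhile (· = U) = List.replicate u U := takeWhile_eq_replicate U rest
      have hu1 : 1 ≤ u := by
        rw [hu, hrhead, List.takeWhile_cons]; simp
      set w' := rest.dropWhile (· = U) with hw'
      have hrw : rest = List.replicate u U ++ w' := by
        rw [← hU]; exact List.takeWhile_append_dropWhile.symm
      have hww : w = List.replicate d D ++ List.replicate u U ++ w' := by
        rw [hw, hrw, List.append_assoc]
      -- counts
      have hcw : w.count D = d + w'.count D ∧ w.count U = u + w'.count U := by
        constructor <;> · rw [hww]; simp [List.count_append, List.count_replicate]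
      set l' := l + d - 1 with hl'
      set r' := r + u - 1 with hr'
      have hlr' : l' ≤ r' := by omega
      have hc' : r' - l' + 1 = (r - l + 1) + u - d := by omega
      have hcount' : w'.count D = w'.count U + (r' - l' + 1) := by omega
      have hpre' : ∀ i, (w'.take i).count D ≤ (w'.take i).count U + (r' - l' + 1) := by
        intro i
        have hp := hpre (d + u + i)
        have htk : w.take (d + u + i)
            = (List.replicate d D ++ List.replicate u U) ++ w'.take i := by
          have hlen2 : d + u + i
              = (List.replicate d D ++ List.replicate u U).length + i := by simp
          rw [hww, hlen2, List.take_length_add_append]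
        rw [htk] at hp
        simp [List.count_append, List.count_replicate] at hp
        omega
      have hw'ne : w' ≠ [] := by
        intro hemp
        rw [hemp] at hcount'
        simp at hcount'
      obtain ⟨y, wt, hyt⟩ : ∃ y wt, w' = y :: wt := by
        obtain ⟨y, wt, h⟩ := List.exists_cons_of_ne_nil hw'ne
        exact ⟨y, wt, h⟩
      have hyD : y = D := by
        have := dropWhile_eq_cons_not (· = U) rest y wt (by rw [← hw']; exact hyt)
        simp at this
        exact y.dichotomy.resolve_left this
      have hw'head : w' = D :: wt := hyD ▸ hyt
      have hlen : w'.length + d + u = w.length := by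
        rw [hww]; simp; omega
      have hstep : decAux f (l, r) w = (l', r') :: decAux g (l', r') w' := by
        subst hfg
        rw [decAux]
        simp only [← hrest, ← hd, ← hu, ← hw', if_neg hre]
        rfl
      obtain ⟨hch, hen⟩ := ih w' l' r' (by omega) hlr' hcount' hpre' ⟨wt, hw'head⟩ g (by omega)
      refine ⟨?_, ?_⟩
      · rw [hstep]
        exact List.isChain_cons_cons.mpr ⟨⟨by omega, by omega, by omega⟩, hch⟩
      · rw [hstep, encAux_cons_eq]
        have e1 : l' - l + 1 = d := by omega
        have e2 : r' - r + 1 = u := by omega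
        rw [e1, e2, hen, hww]

lemma encAux_count : ∀ (t : List (ℕ × ℕ)) (a : ℕ × ℕ), List.Chain' RC (a :: t) →
    (encAux a t).count D = (encAux a t).count U + (a.2 - a.1 + 1) := by
  intro t
  induction t with
  | nil => intro ⟨l, r⟩ _; simp [encAux, List.count_replicate]
  | cons b t ih =>
    intro ⟨l, r⟩ hc
    obtain ⟨⟨h1, h2, h3⟩, hc'⟩ := List.isChain_cons_cons.mp hc
    have hIH := ih b hc'
    rw [encAux_cons_eq]
    simp only [] at h1 h2 h3
    simp [List.count_append, List.count_replicate]
    omega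

lemma encAux_pre : ∀ (t : List (ℕ × ℕ)) (a : ℕ × ℕ), List.Chain' RC (a :: t) → ∀ i,
    ((encAux a t).take i).count D ≤ ((encAux a t).take i).count U + (a.2 - a.1 + 1) := by
  intro t
  induction t with
  | nil =>
    intro ⟨l, r⟩ _ i
    simp [encAux, List.take_replicate, List.count_replicate]
  | cons b t ih =>
    intro ⟨l, r⟩ hc i
    obtain ⟨⟨h1, h2, h3⟩, hc'⟩ := List.isChain_cons_cons.mp hc
    simp only [] at h1 h2 h3
    have hIH := ih b hc'
      (i - ((List.replicate (b.1 - l + 1) D ++ List.replicate (b.2 - r + 1) U).length))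
    rw [encAux_cons_eq, List.take_append, List.take_append,
      List.take_replicate, List.take_replicate]
    simp only [List.length_append, List.length_replicate] at hIH ⊢
    simp [List.count_append, List.count_replicate]
    by_cases hcase : i ≤ b.1 - l + 1 + (b.2 - r + 1)
    · have hz : i - (b.1 - l + 1 + (b.2 - r + 1)) = 0 := by omega
      simp only [hz, List.take_zero, List.count_nil]
      omega
    · omega

lemma encAux_countU : ∀ (t : List (ℕ × ℕ)) (a : ℕ × ℕ), List.Chain' RC (a :: t) →
    (encAux a t).count U + a.2 = t.length + ((a :: t).getLast (by simp)).2 := by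
  intro t
  induction t with
  | nil => intro ⟨l, r⟩ _; simp [encAux, List.count_replicate]
  | cons b t ih =>
    intro ⟨l, r⟩ hc
    obtain ⟨⟨h1, h2, h3⟩, hc'⟩ := List.isChain_cons_cons.mp hc
    simp only [] at h1 h2 h3
    have hIH := ih b hc'
    rw [encAux_cons_eq]
    rw [List.getLast_cons (by simp)]
    simp [List.count_append, List.count_replicate]
    omega

lemma enc_eq (a : ℕ × ℕ) (t : List (ℕ × ℕ)) :
    enc (a :: t) = List.replicate (a.2 - a.1 + 1) U ++ encAux a t := by
  obtain ⟨l, r⟩ := a; rfl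

lemma enc_balanced (L : List (ℕ × ℕ)) (h : Valid L) : (enc L).count U = (enc L).count D := by
  obtain ⟨a, t, rfl, h0, hlr, hc⟩ := h
  rw [enc_eq]
  have := encAux_count t a hc
  simp [List.count_append, List.count_replicate]
  omega

lemma enc_prefix (L : List (ℕ × ℕ)) (h : Valid L) :
    ∀ i, ((enc L).take i).count D ≤ ((enc L).take i).count U := by
  obtain ⟨a, t, rfl, h0, hlr, hc⟩ := h
  intro i
  have hpre := encAux_pre t a hc (i - (a.2 - a.1 + 1))
  rw [enc_eq, List.take_append, List.take_replicate, List.length_replicate]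
  simp [List.count_append, List.count_replicate]
  by_cases hcase : i ≤ a.2 - a.1 + 1
  · have hz : i - (a.2 - a.1 + 1) = 0 := by omega
    simp only [hz, List.take_zero, List.count_nil]
    omega
  · omega

lemma enc_countU (L : List (ℕ × ℕ)) (h : Valid L) : (enc L).count U = rowsSize L := by
  obtain ⟨a, t, rfl, h0, hlr, hc⟩ := h
  rw [enc_eq]
  have hcu := encAux_countU t a hc
  have hlast : (a :: t).getLast? = some ((a :: t).getLast (by simp)) :=
    List.getLast?_eq_getLast (by simp)
  simp [List.count_append, List.count_replicate, rowsSize, hlast]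
  omega

/-! ### Finset layer -/

def rowSet (P : Finset (ℕ × ℕ)) (x : ℕ) : Finset ℕ := (P.filter fun p => p.1 = x).image Prod.snd

def hgt (P : Finset (ℕ × ℕ)) : ℕ := P.sup Prod.fst

def lo (P : Finset (ℕ × ℕ)) (x : ℕ) : ℕ :=
  if h : (rowSet P x).Nonempty then (rowSet P x).min' h else 0

def hi (P : Finset (ℕ × ℕ)) (x : ℕ) : ℕ :=
  if h : (rowSet P x).Nonempty then (rowSet P x).max' h else 0

def pRows (P : Finset (ℕ × ℕ)) : List (ℕ × ℕ) :=
  (List.range (hgt P + 1)).map fun x => (lo P x, hi P x)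

def ofRows (L : List (ℕ × ℕ)) : Finset (ℕ × ℕ) :=
  (Finset.range L.length).biUnion fun x =>
    ({x} : Finset ℕ) ×ˢ Finset.Icc (L.getD x (0,0)).1 (L.getD x (0,0)).2

lemma mem_ofRows (L : List (ℕ × ℕ)) (x y : ℕ) :
    (x, y) ∈ ofRows L ↔ x < L.length ∧ (L.getD x (0,0)).1 ≤ y ∧ y ≤ (L.getD x (0,0)).2 := by
  simp only [ofRows, Finset.mem_biUnion, Finset.mem_range, Finset.mem_product,
    Finset.mem_singleton, Finset.mem_Icc]
  constructor
  · rintro ⟨z, hz, rfl, h2⟩; exact ⟨hz, h2⟩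
  · rintro ⟨h1, h2⟩; exact ⟨x, h1, rfl, h2⟩

section Witness

variable {P : Finset (ℕ × ℕ)} {h : ℕ} {l r : ℕ → ℕ}
variable (H1 : ∀ p ∈ P, p.1 ≤ h) (H2 : ∀ x ≤ h, ∀ y : ℕ, ((x, y) ∈ P ↔ l x ≤ y ∧ y ≤ r x))
variable (H3 : ∀ x ≤ h, l x ≤ r x) (H4 : l 0 = 0)
variable (H5 : ∀ x < h, l x ≤ l (x + 1) ∧ r x ≤ r (x + 1) ∧ l (x + 1) ≤ r x)

include H2 H3 in
lemma rowSet_eq {x : ℕ} (hx : x ≤ h) : rowSet P x = Finset.Icc (l x) (r x) := by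
  ext y
  simp only [rowSet, Finset.mem_image, Finset.mem_filter, Finset.mem_Icc]
  rw [← H2 x hx y]
  constructor
  · rintro ⟨⟨a, b⟩, ⟨hmem, rfl⟩, rfl⟩; exact hmem
  · intro hmem; exact ⟨(x, y), ⟨hmem, rfl⟩, rfl⟩

include H1 H2 H3 in
lemma hgt_eq : hgt P = h := by
  apply _root_.le_antisymm
  · exact Finset.sup_le H1
  · have : (h, l h) ∈ P := (H2 h le_rfl (l h)).mpr ⟨le_rfl, H3 h le_rfl⟩
    exact Finset.le_sup (f := Prod.fst) this

include H2 H3 in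
lemma lo_eq {x : ℕ} (hx : x ≤ h) : lo P x = l x := by
  rw [lo]
  have hI := rowSet_eq H2 H3 hx
  have hne : (rowSet P x).Nonempty := by
    rw [hI]; exact ⟨l x, Finset.mem_Icc.mpr ⟨le_rfl, H3 x hx⟩⟩
  rw [dif_pos hne]
  apply _root_.le_antisymm
  · exact Finset.min'_le _ _ (by rw [hI]; exact Finset.mem_Icc.mpr ⟨le_rfl, H3 x hx⟩)
  · exact Finset.le_min' _ _ _ (fun y hy => (Finset.mem_Icc.mp (hI ▸ hy)).1)

include H2 H3 in
lemma hi_eq {x : ℕ} (hx : x ≤ h) : hi P x = r x := by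
  rw [hi]
  have hI := rowSet_eq H2 H3 hx
  have hne : (rowSet P x).Nonempty := by
    rw [hI]; exact ⟨l x, Finset.mem_Icc.mpr ⟨le_rfl, H3 x hx⟩⟩
  rw [dif_pos hne]
  apply _root_.le_antisymm
  · exact Finset.max'_le _ _ _ (fun y hy => (Finset.mem_Icc.mp (hI ▸ hy)).2)
  · exact Finset.le_max' _ _ (by rw [hI]; exact Finset.mem_Icc.mpr ⟨H3 x hx, le_rfl⟩)

include H5 in
lemma r_mono : ∀ x y, x ≤ y → y ≤ h → r x ≤ r y := by
  intro x y hxy hyh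
  induction y, hxy using Nat.le_induction with
  | base => exact le_rfl
  | succ n hn ih => exact le_trans (ih (by omega)) (H5 n (by omega)).2.1

include H1 H2 H3 in
lemma image_fst_eq : P.image Prod.fst = Finset.range (h + 1) := by
  ext x
  simp only [Finset.mem_image, Finset.mem_range]
  constructor
  · rintro ⟨p, hp, rfl⟩; exact Nat.lt_succ_of_le (H1 p hp)
  · intro hx
    exact ⟨(x, l x), (H2 x (by omega) (l x)).mpr ⟨le_rfl, H3 x (by omega)⟩, rfl⟩

include H1 H2 H3 H4 H5 in
lemma image_snd_eq : P.image Prod.snd = Finset.range (r h + 1) := by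
  ext y
  simp only [Finset.mem_image, Finset.mem_range]
  constructor
  · rintro ⟨⟨x, y⟩, hp, rfl⟩
    have hx := H1 _ hp
    have := ((H2 x hx y).mp hp).2
    have := r_mono H5 x h hx le_rfl
    omega
  · intro hy
    classical
    have hlx : l (Nat.findGreatest (fun z => l z ≤ y) h) ≤ y :=
      Nat.findGreatest_spec (P := fun z => l z ≤ y) (Nat.zero_le h)
        (by simp only [H4]; exact Nat.zero_le y)
    have hxh : Nat.findGreatest (fun z => l z ≤ y) h ≤ h := Nat.findGreatest_le h
    set x := Nat.findGreatest (fun z => l z ≤ y) h with hxdef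
    have hyr : y ≤ r x := by
      rcases Nat.lt_or_ge x h with hlt | hge
      · have hgr : ¬ (l (x + 1) ≤ y) :=
          Nat.findGreatest_is_greatest (P := fun z => l z ≤ y) (n := h) (k := x + 1) (by omega) (by omega)
        have h5 := (H5 x hlt).2.2
        omega
      · have hxe : x = h := _root_.le_antisymm hxh hge
        rw [hxe]; omega
    exact ⟨(x, y), (H2 x hxh y).mpr ⟨hlx, hyr⟩, rfl⟩

include H1 H2 H3 H4 H5 in
lemma ppSize_eq : ppSize P = h + r h + 1 := by
  rw [ppSize, image_fst_eq H1 H2 H3, image_snd_eq H1 H2 H3 H4 H5]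
  simp [Finset.card_range]
  omega

end Witness

lemma valid_le_aux : ∀ (t : List (ℕ × ℕ)) (a : ℕ × ℕ), a.1 ≤ a.2 → List.Chain' RC (a :: t) →
    ∀ p ∈ a :: t, p.1 ≤ p.2 := by
  intro t
  induction t with
  | nil => intro a ha _ p hp; simp at hp; subst hp; exact ha
  | cons b t ih =>
    intro a ha hc p hp
    obtain ⟨⟨h1, h2, h3⟩, hc'⟩ := List.isChain_cons_cons.mp hc
    rcases List.mem_cons.mp hp with rfl | hp'
    · exact ha
    · exact ih b (le_trans h3 h2) hc' p hp'

lemma valid_le {L : List (ℕ × ℕ)} (hv : Valid L) : ∀ p ∈ L, p.1 ≤ p.2 := by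
  obtain ⟨a, t, rfl, h0, hlr, hc⟩ := hv
  exact valid_le_aux t a hlr hc

lemma valid_iff (L : List (ℕ × ℕ)) : Valid L ↔
    L ≠ [] ∧ (L.getD 0 (0,0)).1 = 0 ∧ (L.getD 0 (0,0)).1 ≤ (L.getD 0 (0,0)).2 ∧
    List.Chain' RC L := by
  constructor
  · rintro ⟨a, t, rfl, h0, hlr, hc⟩
    exact ⟨by simp, by simpa using h0, by simpa using hlr, hc⟩
  · rintro ⟨hne, h0, hlr, hc⟩
    cases L with
    | nil => exact absurd rfl hne
    | cons a t => exact ⟨a, t, rfl, by simpa using h0, by simpa using hlr, hc⟩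

lemma chain_getD {L : List (ℕ × ℕ)} (hc : List.Chain' RC L) {x : ℕ} (hx : x + 1 < L.length) :
    RC (L.getD x (0,0)) (L.getD (x+1) (0,0)) := by
  rw [List.getD_eq_getElem _ _ (by omega), List.getD_eq_getElem _ _ hx]
  have := List.isChain_iff_getElem.mp hc x (by omega)
  simpa using this

/-- the witness conditions for `ofRows L` -/
lemma ofRows_witness {L : List (ℕ × ℕ)} (hv : Valid L) :
    (∀ p ∈ ofRows L, p.1 ≤ L.length - 1) ∧
    (∀ x ≤ L.length - 1, ∀ y : ℕ, ((x, y) ∈ ofRows L ↔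
      (L.getD x (0,0)).1 ≤ y ∧ y ≤ (L.getD x (0,0)).2)) ∧
    (∀ x ≤ L.length - 1, (L.getD x (0,0)).1 ≤ (L.getD x (0,0)).2) ∧
    (L.getD 0 (0,0)).1 = 0 ∧
    (∀ x < L.length - 1,
      (L.getD x (0,0)).1 ≤ (L.getD (x+1) (0,0)).1 ∧
      (L.getD x (0,0)).2 ≤ (L.getD (x+1) (0,0)).2 ∧
      (L.getD (x+1) (0,0)).1 ≤ (L.getD x (0,0)).2) := by
  have hne : L ≠ [] := by obtain ⟨a, t, rfl, -⟩ := hv; simp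
  have hlen : 1 ≤ L.length := List.length_pos_iff.mpr hne
  have hc : List.Chain' RC L := ((valid_iff L).mp hv).2.2.2
  refine ⟨?_, ?_, ?_, ((valid_iff L).mp hv).2.1, ?_⟩
  · rintro ⟨x, y⟩ hp
    have := ((mem_ofRows L x y).mp hp).1
    simp only
    omega
  · intro x hx y
    rw [mem_ofRows]
    constructor
    · rintro ⟨-, hy⟩; exact hy
    · intro hy; exact ⟨by omega, hy⟩
  · intro x hx
    refine valid_le hv _ ?_
    rw [List.getD_eq_getElem _ _ (by omega)]
    exact List.getElem_mem _
  · intro x hx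
    exact chain_getD hc (by omega)

lemma isPP_ofRows {L : List (ℕ × ℕ)} (hv : Valid L) : IsPP (ofRows L) := by
  obtain ⟨W1, W2, W3, W4, W5⟩ := ofRows_witness hv
  exact ⟨L.length - 1, _, _, W1, W2, W3, W4, W5⟩

lemma rowsSize_getD {L : List (ℕ × ℕ)} (hne : L ≠ []) :
    rowsSize L = L.length + (L.getD (L.length - 1) (0,0)).2 := by
  rw [rowsSize, List.getLast?_eq_getLast hne, List.getD_eq_getElem _ _ (by
    have := List.length_pos_iff.mpr hne; omega), List.getLast_eq_getElem]
  rfl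

lemma ppSize_ofRows {L : List (ℕ × ℕ)} (hv : Valid L) : ppSize (ofRows L) = rowsSize L := by
  obtain ⟨W1, W2, W3, W4, W5⟩ := ofRows_witness hv
  have hne : L ≠ [] := by obtain ⟨a, t, rfl, -⟩ := hv; simp
  have hlen : 1 ≤ L.length := List.length_pos_iff.mpr hne
  rw [ppSize_eq W1 W2 W3 W4 W5, rowsSize_getD hne]
  omega

lemma pRows_length (P : Finset (ℕ × ℕ)) : (pRows P).length = hgt P + 1 := by simp [pRows]

lemma pRows_getD (P : Finset (ℕ × ℕ)) {x : ℕ} (hx : x < hgt P + 1) :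
    (pRows P).getD x (0,0) = (lo P x, hi P x) := by
  rw [List.getD_eq_getElem _ _ (by simpa [pRows_length] using hx)]
  simp [pRows]

section Witness2

variable {P : Finset (ℕ × ℕ)} {h : ℕ} {l r : ℕ → ℕ}
variable (H1 : ∀ p ∈ P, p.1 ≤ h) (H2 : ∀ x ≤ h, ∀ y : ℕ, ((x, y) ∈ P ↔ l x ≤ y ∧ y ≤ r x))
variable (H3 : ∀ x ≤ h, l x ≤ r x) (H4 : l 0 = 0)
variable (H5 : ∀ x < h, l x ≤ l (x + 1) ∧ r x ≤ r (x + 1) ∧ l (x + 1) ≤ r x)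

include H1 H2 H3 in
lemma pRows_getD' {x : ℕ} (hx : x ≤ h) : (pRows P).getD x (0,0) = (l x, r x) := by
  rw [pRows_getD P (by rw [hgt_eq H1 H2 H3]; omega), lo_eq H2 H3 hx, hi_eq H2 H3 hx]

include H1 H2 H3 H4 H5 in
lemma valid_pRows : Valid (pRows P) := by
  have hlen : (pRows P).length = h + 1 := by rw [pRows_length, hgt_eq H1 H2 H3]
  rw [valid_iff]
  refine ⟨by rw [← List.length_pos_iff]; omega, ?_, ?_, ?_⟩
  · rw [pRows_getD' H1 H2 H3 (by omega), H4]
  · rw [pRows_getD' H1 H2 H3 (by omega)]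
    exact H3 0 (by omega)
  · refine List.isChain_iff_getElem.mpr ?_
    intro i hi
    rw [hlen] at hi
    have e1 : (pRows P)[i] = (l i, r i) := by
      rw [← List.getD_eq_getElem _ (0,0) _, pRows_getD' H1 H2 H3 (by omega)]
    have e2 : (pRows P)[i+1] = (l (i+1), r (i+1)) := by
      rw [← List.getD_eq_getElem _ (0,0) _, pRows_getD' H1 H2 H3 (by omega)]
    rw [e1, e2]
    exact H5 i (by omega)

include H1 H2 H3 in
lemma ofRows_pRows : ofRows (pRows P) = P := by
  have hlen : (pRows P).length = h + 1 := by rw [pRows_length, hgt_eq H1 H2 H3]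
  ext ⟨x, y⟩
  rw [mem_ofRows, hlen]
  constructor
  · rintro ⟨hx, hy1, hy2⟩
    rw [pRows_getD' H1 H2 H3 (by omega)] at hy1 hy2
    exact (H2 x (by omega) y).mpr ⟨hy1, hy2⟩
  · intro hp
    have hx := H1 _ hp
    have := (H2 x hx y).mp hp
    rw [pRows_getD' H1 H2 H3 hx]
    exact ⟨by omega, this.1, this.2⟩

include H1 H2 H3 H4 H5 in
lemma rowsSize_pRows : rowsSize (pRows P) = ppSize P := by
  have hlen : (pRows P).length = h + 1 := by rw [pRows_length, hgt_eq H1 H2 H3]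
  rw [rowsSize_getD (by rw [← List.length_pos_iff]; omega), hlen,
    ppSize_eq H1 H2 H3 H4 H5]
  rw [show h + 1 - 1 = h from rfl, pRows_getD' H1 H2 H3 le_rfl]
  show h + 1 + r h = h + r h + 1
  omega

end Witness2

lemma pRows_ofRows {L : List (ℕ × ℕ)} (hv : Valid L) : pRows (ofRows L) = L := by
  obtain ⟨W1, W2, W3, W4, W5⟩ := ofRows_witness hv
  have hne : L ≠ [] := by obtain ⟨a, t, rfl, -⟩ := hv; simp
  have hlen : 1 ≤ L.length := List.length_pos_iff.mpr hne
  have hlen2 : (pRows (ofRows L)).length = L.length := by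
    rw [pRows_length, hgt_eq W1 W2 W3]; omega
  apply List.ext_getElem (by rw [hlen2])
  intro i h1 h2
  rw [← List.getD_eq_getElem _ (0,0) h1, ← List.getD_eq_getElem _ (0,0) h2]
  rw [pRows_getD' W1 W2 W3 (by rw [hlen2] at h1; omega)]

lemma dec_spec {w : List DyckStep}
    (hpre : ∀ i, ((w.take i)).count D ≤ ((w.take i)).count U)
    (hbal : w.count U = w.count D) (hne : w ≠ []) :
    Valid (dec w) ∧ enc (dec w) = w := by
  -- the first letter is U
  obtain ⟨x, t, rfl⟩ : ∃ x t, w = x :: t := by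
    obtain ⟨x, t, h⟩ := List.exists_cons_of_ne_nil hne
    exact ⟨x, t, h⟩
  have hxU : x = U := by
    rcases x.dichotomy with h | h
    · exact h
    · exfalso
      have := hpre 1
      subst h
      simp [List.count_cons] at this
  subst hxU
  set w₀ : List DyckStep := U :: t with hw₀
  set a₀ := (w₀.takeWhile (· = U)).length with ha₀
  have hU : w₀.takeWhile (· = U) = List.replicate a₀ U := takeWhile_eq_replicate U w₀
  have ha1 : 1 ≤ a₀ := by rw [ha₀, hw₀, List.takeWhile_cons]; simp
  set w₁ := w₀.dropWhile (· = U) with hw₁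
  have hsplit : w₀ = List.replicate a₀ U ++ w₁ := by
    rw [← hU]; exact List.takeWhile_append_dropWhile.symm
  have hcnt : w₀.count U = a₀ + w₁.count U ∧ w₀.count D = w₁.count D := by
    constructor <;> · rw [hsplit]; simp [List.count_append, List.count_replicate]
  have hw₁ne : w₁ ≠ [] := by
    intro hemp
    rw [hemp] at hcnt
    simp at hcnt
    omega
  obtain ⟨y, yt, hyt⟩ : ∃ y yt, w₁ = y :: yt := by
    obtain ⟨y, yt, hy⟩ := List.exists_cons_of_ne_nil hw₁ne
    exact ⟨y, yt, hy⟩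
  have hyD : y = D := by
    have := dropWhile_eq_cons_not (· = U) w₀ y yt (by rw [← hw₁]; exact hyt)
    simp at this
    exact y.dichotomy.resolve_left this
  have hlen1 : w₁.length + a₀ = w₀.length := by rw [hsplit]; simp; omega
  have hc0 : a₀ - 1 - 0 + 1 = a₀ := by omega
  have hcount1 : w₁.count D = w₁.count U + (a₀ - 1 - 0 + 1) := by
    rw [hc0]; omega
  have hpre1 : ∀ i, ((w₁.take i)).count D ≤ ((w₁.take i)).count U + (a₀ - 1 - 0 + 1) := by
    intro i
    rw [hc0]
    have hp := hpre (a₀ + i)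
    have htk : w₀.take (a₀ + i) = List.replicate a₀ U ++ w₁.take i := by
      have e : a₀ + i = (List.replicate a₀ U).length + i := by simp
      rw [hsplit, e, List.take_length_add_append]
    rw [htk] at hp
    simp [List.count_append, List.count_replicate] at hp
    omega
  obtain ⟨hch, hen⟩ := decAux_spec w₁.length w₁ 0 (a₀ - 1) le_rfl (by omega)
    hcount1 hpre1 ⟨yt, hyD ▸ hyt⟩ w₀.length (by omega)
  have hdec : dec w₀ = (0, a₀ - 1) :: decAux w₀.length (0, a₀ - 1) w₁ := by
    rw [dec]
  constructor
  · rw [hdec]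
    exact ⟨(0, a₀ - 1), _, rfl, rfl, by simp, hch⟩
  · rw [hdec, enc_eq, hen]
    show List.replicate (a₀ - 1 - 0 + 1) U ++ w₁ = w₀
    rw [hc0, ← hsplit]

/-- counting Dyck words as lists, via mathlib's `DyckWord` -/
lemma ncard_dyck (n : ℕ) :
    Set.ncard {w : List DyckStep | (∀ i, ((w.take i)).count D ≤ ((w.take i)).count U) ∧
      w.count U = w.count D ∧ w.count U = n} = catalan n := by
  have himg : {w : List DyckStep | (∀ i, ((w.take i)).count D ≤ ((w.take i)).count U) ∧
      w.count U = w.count D ∧ w.count U = n}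
      = DyckWord.toList '' {p : DyckWord | p.semilength = n} := by
    ext w
    constructor
    · rintro ⟨hpre, hbal, hcu⟩
      exact ⟨⟨w, hbal, hpre⟩, hcu, rfl⟩
    · rintro ⟨p, hp, rfl⟩
      exact ⟨p.count_D_le_count_U, p.count_U_eq_count_D, hp⟩
  rw [himg, Set.ncard_image_of_injOn (fun p _ q _ h => DyckWord.ext h)]
  rw [← Nat.card_coe_set_eq]
  rw [Nat.card_congr (Equiv.subtypeEquivRight (q := fun p : DyckWord => p.semilength = n)
    (fun p => by simp))]
  rw [Nat.card_eq_fintype_card]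
  exact DyckWord.card_dyckWord_semilength_eq_catalan n

theorem main (n : ℕ) (hn : 1 ≤ n) :
    Set.ncard {P : Finset (ℕ × ℕ) | IsPP P ∧ ppSize P = n} = catalan n := by
  classical
  have hinj : Set.InjOn (fun P => enc (pRows P)) {P : Finset (ℕ × ℕ) | IsPP P ∧ ppSize P = n} := by
    rintro P hP Q hQ hFE
    obtain ⟨⟨h, l, r, H1, H2, H3, H4, H5⟩, hs⟩ := hP
    obtain ⟨⟨h', l', r', G1, G2, G3, G4, G5⟩, hs'⟩ := hQ
    have v1 : Valid (pRows P) := valid_pRows H1 H2 H3 H4 H5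
    have v2 : Valid (pRows Q) := valid_pRows G1 G2 G3 G4 G5
    have hPQ : pRows P = pRows Q := by
      rw [← dec_enc _ v1, ← dec_enc _ v2]
      simp only at hFE
      rw [hFE]
    rw [← ofRows_pRows H1 H2 H3, hPQ, ofRows_pRows G1 G2 G3]
  have himg : (fun P => enc (pRows P)) '' {P : Finset (ℕ × ℕ) | IsPP P ∧ ppSize P = n}
      = {w : List DyckStep | (∀ i, ((w.take i)).count D ≤ ((w.take i)).count U) ∧
        w.count U = w.count D ∧ w.count U = n} := by
    ext w
    constructor
    · rintro ⟨P, ⟨⟨h, l, r, H1, H2, H3, H4, H5⟩, hsize⟩, rfl⟩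
      have v : Valid (pRows P) := valid_pRows H1 H2 H3 H4 H5
      refine ⟨enc_prefix _ v, enc_balanced _ v, ?_⟩
      rw [enc_countU _ v, rowsSize_pRows H1 H2 H3 H4 H5, hsize]
    · rintro ⟨hpre, hbal, hcu⟩
      have hne : w ≠ [] := by
        intro hemp
        rw [hemp] at hcu
        simp at hcu
        omega
      obtain ⟨hv, hew⟩ := dec_spec hpre hbal hne
      refine ⟨ofRows (dec w), ⟨isPP_ofRows hv, ?_⟩, ?_⟩
      · rw [ppSize_ofRows hv]
        have hcount := enc_countU _ hv
        rw [hew] at hcount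
        omega
      · show enc (pRows (ofRows (dec w))) = w
        rw [pRows_ofRows hv, hew]
  rw [← Set.ncard_image_of_injOn hinj, himg]
  exact ncard_dyck n

end PPCat

theorem pp_count_eq_catalan (n : ℕ) (hn : 1 ≤ n) :
    Set.ncard {P : Finset (ℕ × ℕ) | IsPP P ∧ ppSize P = n} = catalan n :=
  PPCat.main n hn
end

section
/- Let A be a non-ambiguous tree such that for all u, v ∈ V_L, u.1 < v.1 implies u.2 ≤ v.2, and for all u, v ∈ V_R, u.2 < v.2 implies u.1 ≤ v.1. Then the filling F(A) = {(x,y) ∈ ℕ × ℕ : (∃ p ∈ A with p.1 = x and p.2 ≤ y) and (∃ q ∈ A with q.2 = y and q.1 ≤ x)} is a parallelogram polyomino. -/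
/-- A non-ambiguous tree: a finite set of points of `ℕ × ℕ`. -/
def IsNAT (A : Finset (ℕ × ℕ)) : Prop :=
  (0, 0) ∈ A ∧
  (∀ p ∈ A, p ≠ (0, 0) →
    Xor' (∃ q ∈ A, q.1 = p.1 ∧ q.2 < p.2) (∃ r ∈ A, r.2 = p.2 ∧ r.1 < p.1)) ∧
  (∀ p ∈ A, (∀ x' < p.1, ∃ q ∈ A, q.1 = x') ∧ (∀ y' < p.2, ∃ q ∈ A, q.2 = y'))

/-- The set of left children of a non-ambiguous tree. -/
def VL (A : Finset (ℕ × ℕ)) : Set (ℕ × ℕ) :=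
  {p | p ∈ A ∧ p ≠ (0, 0) ∧ ∃ r ∈ A, r.2 = p.2 ∧ r.1 < p.1}

/-- The set of right children of a non-ambiguous tree. -/
def VR (A : Finset (ℕ × ℕ)) : Set (ℕ × ℕ) :=
  {p | p ∈ A ∧ p ≠ (0, 0) ∧ ∃ q ∈ A, q.1 = p.1 ∧ q.2 < p.2}

theorem filling_is_pp (A : Finset (ℕ × ℕ)) (hA : IsNAT A)
    (hL : ∀ u ∈ VL A, ∀ v ∈ VL A, u.1 < v.1 → u.2 ≤ v.2)
    (hR : ∀ u ∈ VR A, ∀ v ∈ VR A, u.2 < v.2 → u.1 ≤ v.1) :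
    ∃ Q : Finset (ℕ × ℕ),
      (∀ x y : ℕ, (x, y) ∈ Q ↔
        (∃ p ∈ A, p.1 = x ∧ p.2 ≤ y) ∧ (∃ q ∈ A, q.2 = y ∧ q.1 ≤ x)) ∧
      IsPP Q := by
  classical
  obtain ⟨hroot, hxor, hcomplete⟩ := hA
  obtain ⟨ph, hph, hph2⟩ := A.exists_max_image Prod.fst ⟨(0,0), hroot⟩
  obtain ⟨pH, hpH, hpH2⟩ := A.exists_max_image Prod.snd ⟨(0,0), hroot⟩
  set h : ℕ := ph.1 with hh
  set H : ℕ := pH.2 with hH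
  set l : ℕ → ℕ := fun x => sInf {y | (x, y) ∈ A} with hldef
  set m : ℕ → ℕ := fun y => sInf {x | (x, y) ∈ A} with hmdef
  have colNE : ∀ x ≤ h, ∃ y, (x, y) ∈ A := by
    intro x hx
    rcases eq_or_lt_of_le hx with heq | hlt
    · exact ⟨ph.2, by rw [heq, hh]; simpa using hph⟩
    · obtain ⟨q, hq, hq1⟩ := (hcomplete ph hph).1 x hlt
      exact ⟨q.2, by rw [← hq1]; simpa using hq⟩
  have rowNE : ∀ y ≤ H, ∃ x, (x, y) ∈ A := by
    intro y hy
    rcases eq_or_lt_of_le hy with heq | hlt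
    · exact ⟨pH.1, by rw [heq, hH]; simpa using hpH⟩
    · obtain ⟨q, hq, hq1⟩ := (hcomplete pH hpH).2 y hlt
      exact ⟨q.1, by rw [← hq1]; simpa using hq⟩
  have lmem : ∀ x ≤ h, (x, l x) ∈ A := fun x hx => Nat.sInf_mem (colNE x hx)
  have mmem : ∀ y ≤ H, (m y, y) ∈ A := fun y hy => Nat.sInf_mem (rowNE y hy)
  have l_le : ∀ x y, (x, y) ∈ A → l x ≤ y := fun x y hxy => Nat.sInf_le hxy
  have m_le : ∀ x y, (x, y) ∈ A → m y ≤ x := fun x y hxy => Nat.sInf_le hxy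
  have l0 : l 0 = 0 := Nat.le_zero.1 (l_le 0 0 hroot)
  have m0 : m 0 = 0 := Nat.le_zero.1 (m_le 0 0 hroot)
  have xle : ∀ x y, (x, y) ∈ A → x ≤ h := fun x y hxy => hph2 (x, y) hxy
  have yle : ∀ x y, (x, y) ∈ A → y ≤ H := fun x y hxy => hpH2 (x, y) hxy
  have hVL : ∀ x, 1 ≤ x → x ≤ h → (x, l x) ∈ VL A := by
    intro x h1 h2
    have hxA := lmem x h2
    have hne : (x, l x) ≠ (0, 0) := by
      intro hcon
      have : x = 0 := congrArg Prod.fst hcon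
      omega
    refine ⟨hxA, hne, ?_⟩
    rcases hxor _ hxA hne with ⟨⟨q, hq, hq1, hq2⟩, _⟩ | ⟨hleft, _⟩
    · have hq1' : q.1 = x := hq1
      exact absurd (l_le x q.2 (by rw [← hq1']; simpa using hq)) (not_le.2 hq2)
    · exact hleft
  have hVR : ∀ y, 1 ≤ y → y ≤ H → (m y, y) ∈ VR A := by
    intro y h1 h2
    have hyA := mmem y h2
    have hne : (m y, y) ≠ (0, 0) := by
      intro hcon
      have : y = 0 := congrArg Prod.snd hcon
      omega
    refine ⟨hyA, hne, ?_⟩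
    rcases hxor _ hyA hne with ⟨hright, _⟩ | ⟨⟨r, hr, hr2, hr1⟩, _⟩
    · exact hright
    · have hr2' : r.2 = y := hr2
      exact absurd (m_le r.1 y (by rw [← hr2']; simpa using hr)) (not_le.2 hr1)
  have lmono : ∀ x1 x2, x1 ≤ x2 → x2 ≤ h → l x1 ≤ l x2 := by
    intro x1 x2 h12 h2
    rcases h12.lt_or_eq with hlt | heq
    · rcases Nat.eq_zero_or_pos x1 with h0 | h1
      · rw [h0, l0]; exact Nat.zero_le _
      · exact hL _ (hVL x1 h1 (le_of_lt (lt_of_lt_of_le hlt h2))) _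
          (hVL x2 (by omega) h2) hlt
    · rw [heq]
  have mmono : ∀ y1 y2, y1 ≤ y2 → y2 ≤ H → m y1 ≤ m y2 := by
    intro y1 y2 h12 h2
    rcases h12.lt_or_eq with hlt | heq
    · rcases Nat.eq_zero_or_pos y1 with h0 | h1
      · rw [h0, m0]; exact Nat.zero_le _
      · exact hR _ (hVR y1 h1 (le_of_lt (lt_of_lt_of_le hlt h2))) _
          (hVR y2 (by omega) h2) hlt
    · rw [heq]
  set r : ℕ → ℕ := fun x => Nat.findGreatest (fun y => m y ≤ x) H with hrdef
  have r_le_H : ∀ x, r x ≤ H := fun x => Nat.findGreatest_le H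
  have r_spec : ∀ x, m (r x) ≤ x := by
    intro x
    exact Nat.findGreatest_spec (P := fun y => m y ≤ x) (Nat.zero_le H) (by show m 0 ≤ x; rw [m0]; exact Nat.zero_le x)
  have le_r : ∀ x y, y ≤ H → m y ≤ x → y ≤ r x := fun x y hy hm =>
    Nat.le_findGreatest hy hm
  have l_le_r : ∀ x ≤ h, l x ≤ r x := fun x hx =>
    le_r x (l x) (yle x (l x) (lmem x hx)) (m_le x (l x) (lmem x hx))
  refine ⟨(Finset.range (h+1) ×ˢ Finset.range (H+1)).filter
      (fun p => l p.1 ≤ p.2 ∧ m p.2 ≤ p.1), ?_, ?_⟩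
  · intro x y
    simp only [Finset.mem_filter, Finset.mem_product, Finset.mem_range, Nat.lt_succ_iff]
    constructor
    · rintro ⟨⟨hx, hy⟩, hlx, hmy⟩
      exact ⟨⟨(x, l x), lmem x hx, rfl, hlx⟩, ⟨(m y, y), mmem y hy, rfl, hmy⟩⟩
    · rintro ⟨⟨p, hp, hp1, hp2⟩, ⟨q, hq, hq2, hq1⟩⟩
      have hpA : (x, p.2) ∈ A := by rw [← hp1]; simpa using hp
      have hqA : (q.1, y) ∈ A := by rw [← hq2]; simpa using hq
      have hx : x ≤ h := xle x p.2 hpA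
      have hy : y ≤ H := yle q.1 y hqA
      exact ⟨⟨hx, hy⟩, (l_le x p.2 hpA).trans hp2, (m_le q.1 y hqA).trans hq1⟩
  · refine ⟨h, l, r, ?_, ?_, l_le_r, l0, ?_⟩
    · intro p hp
      simp only [Finset.mem_filter, Finset.mem_product, Finset.mem_range,
        Nat.lt_succ_iff] at hp
      exact hp.1.1
    · intro x hx y
      simp only [Finset.mem_filter, Finset.mem_product, Finset.mem_range, Nat.lt_succ_iff]
      constructor
      · rintro ⟨⟨_, hy⟩, hlx, hmy⟩
        exact ⟨hlx, le_r x y hy hmy⟩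
      · rintro ⟨hlx, hyr⟩
        have hy : y ≤ H := hyr.trans (r_le_H x)
        exact ⟨⟨hx, hy⟩, hlx, (mmono y (r x) hyr (r_le_H x)).trans (r_spec x)⟩
    · intro x hx
      have hx1 : x + 1 ≤ h := hx
      have hvl := hVL (x + 1) (Nat.succ_le_succ (Nat.zero_le x)) hx1
      obtain ⟨_, _, rr, hrr, hrr2, hrr1⟩ := hvl
      have hrr2' : rr.2 = l (x + 1) := hrr2
      have hrr1' : rr.1 < x + 1 := hrr1
      have hrrA : (rr.1, l (x + 1)) ∈ A := by rw [← hrr2']; simpa using hrr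
      have hml : m (l (x + 1)) ≤ x := (m_le rr.1 _ hrrA).trans (by omega)
      refine ⟨lmono x (x + 1) (Nat.le_succ x) hx1, ?_, ?_⟩
      · exact le_r (x + 1) (r x) (r_le_H x) ((r_spec x).trans (Nat.le_succ x))
      · exact le_r x (l (x + 1)) (yle (x + 1) _ (lmem (x + 1) hx1)) hml
end

section
/- The de-filling map Ŝ and the filling map F̂ are mutually inverse: for every finite nonempty U ⊆ ℕ × ℕ avoiding the empty-corner pattern, the set Ŝ(U) avoids the filled-corner pattern and F̂(Ŝ(U)) = U; and for every finite nonempty W ⊆ ℕ × ℕ avoiding the filled-corner pattern, the set F̂(W) avoids the empty-corner pattern and Ŝ(F̂(W)) = W. -/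
/-- The de-filling map `Ŝ`: keep only the cells that are not strictly below another
cell of the same column and strictly to the right of another cell of the same row. -/
def Shat (U : Finset (ℕ × ℕ)) : Finset (ℕ × ℕ) :=
  U.filter (fun c => ¬ ((∃ y' < c.2, (c.1, y') ∈ U) ∧ (∃ x' < c.1, (x', c.2) ∈ U)))

/-- The filling map `F̂`:
`F̂(U) = {(x,y) : (∃ p ∈ U, p.1 = x ∧ p.2 ≤ y) ∧ (∃ q ∈ U, q.2 = y ∧ q.1 ≤ x)}`. -/
def Fhat (U : Finset (ℕ × ℕ)) : Finset (ℕ × ℕ) :=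
  ((U.image Prod.fst) ×ˢ (U.image Prod.snd)).filter
    (fun c => (∃ p ∈ U, p.1 = c.1 ∧ p.2 ≤ c.2) ∧ (∃ q ∈ U, q.2 = c.2 ∧ q.1 ≤ c.1))

/-- `U` avoids the empty-corner pattern. -/
def AvoidsEmptyCorner (U : Finset (ℕ × ℕ)) : Prop :=
  ∀ x₁ y₁ x₂ y₂ : ℕ, (x₁, y₁) ∈ U → (x₂, y₂) ∈ U → x₂ < x₁ → y₁ < y₂ → (x₁, y₂) ∈ U

/-- `U` avoids the filled-corner pattern. -/
def AvoidsFilledCorner (U : Finset (ℕ × ℕ)) : Prop :=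
  ∀ x₁ y₁ x₂ y₂ : ℕ, (x₁, y₁) ∈ U → (x₂, y₂) ∈ U → x₂ < x₁ → y₁ < y₂ → (x₁, y₂) ∉ U

lemma mem_Shat {U : Finset (ℕ × ℕ)} {x y : ℕ} :
    (x, y) ∈ Shat U ↔ (x, y) ∈ U ∧
      ¬ ((∃ y' < y, (x, y') ∈ U) ∧ (∃ x' < x, (x', y) ∈ U)) := by
  simp [Shat]

lemma mem_Fhat {U : Finset (ℕ × ℕ)} {x y : ℕ} :
    (x, y) ∈ Fhat U ↔
      (∃ p ∈ U, p.1 = x ∧ p.2 ≤ y) ∧ (∃ q ∈ U, q.2 = y ∧ q.1 ≤ x) := by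
  constructor
  · intro h; exact (Finset.mem_filter.mp h).2
  · rintro ⟨⟨p, hp, hp1, hp2⟩, ⟨q, hq, hq1, hq2⟩⟩
    refine Finset.mem_filter.mpr ⟨Finset.mem_product.mpr ⟨?_, ?_⟩,
      ⟨p, hp, hp1, hp2⟩, ⟨q, hq, hq1, hq2⟩⟩
    · exact Finset.mem_image.mpr ⟨p, hp, hp1⟩
    · exact Finset.mem_image.mpr ⟨q, hq, hq1⟩

lemma shat_subset (U : Finset (ℕ × ℕ)) : Shat U ⊆ U := Finset.filter_subset _ _

lemma subset_fhat (W : Finset (ℕ × ℕ)) : W ⊆ Fhat W := by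
  rintro ⟨x, y⟩ hc
  exact mem_Fhat.mpr ⟨⟨(x, y), hc, rfl, le_refl _⟩, ⟨(x, y), hc, rfl, le_refl _⟩⟩

lemma exists_col (U : Finset (ℕ × ℕ)) :
    ∀ y x : ℕ, (x, y) ∈ U → ∃ y₀ ≤ y, (x, y₀) ∈ Shat U := by
  intro y
  induction y using Nat.strong_induction_on with
  | _ y ih =>
    intro x h
    by_cases hs : (x, y) ∈ Shat U
    · exact ⟨y, le_refl y, hs⟩
    · have hab : (∃ y' < y, (x, y') ∈ U) ∧ (∃ x' < x, (x', y) ∈ U) := by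
        by_contra hc
        exact hs (mem_Shat.mpr ⟨h, hc⟩)
      obtain ⟨⟨y', hy', hy'U⟩, -⟩ := hab
      obtain ⟨y₀, h₀, hmem⟩ := ih y' hy' x hy'U
      exact ⟨y₀, le_of_lt (lt_of_le_of_lt h₀ hy'), hmem⟩

lemma exists_row (U : Finset (ℕ × ℕ)) :
    ∀ x y : ℕ, (x, y) ∈ U → ∃ x₀ ≤ x, (x₀, y) ∈ Shat U := by
  intro x
  induction x using Nat.strong_induction_on with
  | _ x ih =>
    intro y h
    by_cases hs : (x, y) ∈ Shat U
    · exact ⟨x, le_refl x, hs⟩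
    · have hab : (∃ y' < y, (x, y') ∈ U) ∧ (∃ x' < x, (x', y) ∈ U) := by
        by_contra hc
        exact hs (mem_Shat.mpr ⟨h, hc⟩)
      obtain ⟨-, ⟨x', hx', hx'U⟩⟩ := hab
      obtain ⟨x₀, h₀, hmem⟩ := ih x' hx' y hx'U
      exact ⟨x₀, le_of_lt (lt_of_le_of_lt h₀ hx'), hmem⟩

theorem shat_fhat_inverse :
    (∀ U : Finset (ℕ × ℕ), U.Nonempty → AvoidsEmptyCorner U →
      AvoidsFilledCorner (Shat U) ∧ Fhat (Shat U) = U) ∧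
    (∀ W : Finset (ℕ × ℕ), W.Nonempty → AvoidsFilledCorner W →
      AvoidsEmptyCorner (Fhat W) ∧ Shat (Fhat W) = W) := by
  constructor
  · intro U _ hU
    constructor
    · intro x₁ y₁ x₂ y₂ h1 h2 hx hy hmem
      exact (mem_Shat.mp hmem).2
        ⟨⟨y₁, hy, shat_subset U h1⟩, ⟨x₂, hx, shat_subset U h2⟩⟩
    · ext ⟨x, y⟩
      rw [mem_Fhat]
      constructor
      · rintro ⟨⟨⟨px, py⟩, hp, rfl, hp2⟩, ⟨⟨qx, qy⟩, hq, rfl, hq2⟩⟩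
        have hpU := shat_subset U hp
        have hqU := shat_subset U hq
        rcases eq_or_lt_of_le hp2 with h | h
        · rw [← h]; exact hpU
        · rcases eq_or_lt_of_le hq2 with h' | h'
          · rw [← h']; exact hqU
          · exact hU px py qx qy hpU hqU h' h
      · intro h
        obtain ⟨y₀, hy₀, hmem⟩ := exists_col U y x h
        obtain ⟨x₀, hx₀, hmem'⟩ := exists_row U x y h
        exact ⟨⟨(x, y₀), hmem, rfl, hy₀⟩, ⟨(x₀, y), hmem', rfl, hx₀⟩⟩
  · intro W _ hW
    constructor
    · intro x₁ y₁ x₂ y₂ h1 h2 hx hy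
      obtain ⟨⟨p, hp, hp1, hp2⟩, -⟩ := mem_Fhat.mp h1
      obtain ⟨-, ⟨q, hq, hq1, hq2⟩⟩ := mem_Fhat.mp h2
      exact mem_Fhat.mpr ⟨⟨p, hp, hp1, hp2.trans hy.le⟩, ⟨q, hq, hq1, hq2.trans hx.le⟩⟩
    · ext ⟨x, y⟩
      rw [mem_Shat]
      constructor
      · rintro ⟨hmem, hnot⟩
        obtain ⟨⟨⟨px, py⟩, hp, rfl, hp2⟩, ⟨⟨qx, qy⟩, hq, rfl, hq2⟩⟩ := mem_Fhat.mp hmem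
        rcases eq_or_lt_of_le hp2 with h | h
        · rw [← h]; exact hp
        · rcases eq_or_lt_of_le hq2 with h' | h'
          · rw [← h']; exact hq
          · exact absurd ⟨⟨py, h, subset_fhat W hp⟩, ⟨qx, h', subset_fhat W hq⟩⟩ hnot
      · intro h
        refine ⟨subset_fhat W h, ?_⟩
        rintro ⟨⟨y', hy', hyF⟩, ⟨x', hx', hxF⟩⟩
        obtain ⟨⟨⟨px, py⟩, hp, rfl, hp2⟩, -⟩ := mem_Fhat.mp hyF
        obtain ⟨-, ⟨⟨qx, qy⟩, hq, rfl, hq2⟩⟩ := mem_Fhat.mp hxF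
        exact hW px py qx qy hp hq (lt_of_le_of_lt hq2 hx') (lt_of_le_of_lt hp2 hy') h
end
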